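/- Directed strong bisimilarity is the complement of directed strong apartness: for all states p, q, p is directed strongly bisimilar to q if and only if p is not directed strongly apart from q. -/

import Mathlib

variable {X A : Type*}

/-- `Q` is a directed strong apartness relation. -/
def IsDSApartRel (step : A → X → X → Prop) (Q : X → X → Prop) : Prop :=
  ∀ (a : A) (p p' q : X), step a p p' →
    (∀ q', step a q q' → Q p' q' ∨ Q q' p') → Q p q

/-- Directed strong apartness: the least directed strong apartness relation. -/
def DSApart (step : A → X → X → Prop) (p q : X) : Prop :=
  ∀ Q : X → X → Prop, IsDSApartRel step Q → Q p q

/-- `R` is a directed strong bisimulation. -/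
def IsDSBisim (step : A → X → X → Prop) (R : X → X → Prop) : Prop :=
  ∀ (a : A) (p p' q : X), R p q → step a p p' → ∃ q', step a q q' ∧ R p' q' ∧ R q' p'

/-- Directed strong bisimilarity. -/
def DSBisim (step : A → X → X → Prop) (p q : X) : Prop :=
  ∃ R : X → X → Prop, IsDSBisim step R ∧ R p q

theorem dsBisim_iff_not_dsApart (step : A → X → X → Prop) (p q : X) :
    DSBisim step p q ↔ ¬ DSApart step p q := by
  constructor
  · rintro hb hA
    refine hA (fun p q => ¬ DSBisim step p q) ?_ hb
    intro a p p' q hstep hall hbis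
    obtain ⟨R, hR, hpq⟩ := hbis
    obtain ⟨q', hq', h1, h2⟩ := hR a p p' q hpq hstep
    rcases hall q' hq' with h | h
    · exact h ⟨R, hR, h1⟩
    · exact h ⟨R, hR, h2⟩
  · intro hna
    refine ⟨fun p q => ¬ DSApart step p q, ?_, hna⟩
    intro a p p' q hpq hstep
    by_contra hcon
    push_neg at hcon
    apply hpq
    intro Q hQ
    refine hQ a p p' q hstep ?_
    intro q' hq'
    by_contra hc
    push_neg at hc
    by_cases h : DSApart step p' q'
    · exact hc.1 (h Q hQ)
    · exact hc.2 ((hcon q' hq' h) Q hQ)
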